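/- Let Ξ be an x-tower site as above with μ points. Then the monomials {x^i y^j : (i,j) ∈ S_x(Ξ)} span a μ-dimensional subspace P of F[x,y] such that the evaluation map p ↦ (p(ξ))_{ξ∈Ξ} restricted to P is a linear isomorphism onto F^μ; equivalently, (Ξ, span{x^i y^j : (i,j) ∈ S_x(Ξ)}) is a regular (poised) interpolation scheme. -/

import Mathlib

open MvPolynomial

/-- The staircase (lower set) `S_x(Ξ) = {(i,j) : j ≤ ν, i ≤ m j}` of an x-tower site. -/
def towerIndex (ν : ℕ) (m : ℕ → ℕ) : Finset (ℕ × ℕ) :=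
  ((Finset.range (m 0 + 1)) ×ˢ Finset.range (ν + 1)).filter (fun p => p.1 ≤ m p.2)

/-- Evaluation of a bivariate polynomial at a point `(a,b)`. -/
noncomputable def ev2 {F : Type*} [Field F] (a b : F) : MvPolynomial (Fin 2) F →+* F :=
  eval (fun k : Fin 2 => if k = 0 then a else b)

section Aux

open Polynomial Finset

lemma zero_of_roots {F : Type*} [Field F] (n : ℕ) (x : ℕ → F) (p : Polynomial F)
    (hd : p.natDegree ≤ n) (hinj : ∀ s t, s ≤ n → t ≤ n → x s = x t → s = t)
    (hv : ∀ s, s ≤ n → p.eval (x s) = 0) : p = 0 := by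
  classical
  apply Polynomial.eq_zero_of_natDegree_lt_card_of_eval_eq_zero' p
    ((Finset.range (n+1)).image x)
  · intro i hi
    simp only [Finset.mem_image, Finset.mem_range] at hi
    obtain ⟨s, hs, rfl⟩ := hi
    exact hv s (Nat.lt_succ_iff.mp hs)
  · rw [Finset.card_image_of_injOn, Finset.card_range]
    · omega
    · intro a ha b hb hab
      simp only [Finset.mem_coe, Finset.mem_range] at ha hb
      exact hinj a b (by omega) (by omega) hab

lemma core {F : Type*} [Field F] (ν : ℕ) :
    ∀ (m : ℕ → ℕ) (y : ℕ → F) (xs : ℕ → ℕ → F) (q : ℕ → Polynomial F),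
    (∀ j k, j < k → k ≤ ν → m k < m j) →
    (∀ j k, j ≤ ν → k ≤ ν → y j = y k → j = k) →
    (∀ j s t, j ≤ ν → s ≤ m j → t ≤ m j → xs s j = xs t j → s = t) →
    (∀ j, j ≤ ν → (q j).natDegree ≤ m j) →
    (∀ t s, t ≤ ν → s ≤ m t →
      ∑ j ∈ Finset.range (ν+1), (q j).eval (xs s t) * (y t)^j = 0) →
    ∀ j, j ≤ ν → q j = 0 := by
  induction ν with
  | zero =>
    intro m y xs q hm hy hx hdeg hvan j hj
    interval_cases j
    refine zero_of_roots (m 0) (fun s => xs s 0) _ (hdeg 0 le_rfl)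
      (fun s t hs ht h => hx 0 s t le_rfl hs ht h) (fun s hs => ?_)
    have := hvan 0 s le_rfl hs
    simpa using this
  | succ ν ih =>
    intro m y xs q hm hy hx hdeg hvan
    have hmono : ∀ u v, u ≤ v → v ≤ ν + 1 → m v ≤ m u := by
      intro u v huv hv
      rcases eq_or_lt_of_le huv with rfl | h
      · exact le_rfl
      · exact (hm u v h hv).le
    set a := y 0 with ha
    set Q : Polynomial F := ∑ j ∈ Finset.range (ν+2), a^j • q j with hQdef
    have hQ0 : ∀ x : F, Q.eval x = ∑ j ∈ Finset.range (ν+2), (q j).eval x * a ^ j := by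
      intro x
      rw [hQdef, Polynomial.eval_finset_sum]
      exact Finset.sum_congr rfl fun j _ => by
        rw [Polynomial.eval_smul, smul_eq_mul]; ring
    have hQ : Q = 0 := by
      refine zero_of_roots (m 0) (fun s => xs s 0) _ ?_
        (fun s t hs ht h => hx 0 s t (by omega) hs ht h) (fun s hs => ?_)
      · refine Polynomial.natDegree_sum_le_of_forall_le _ _ (fun j hj => ?_)
        refine (Polynomial.natDegree_smul_le _ _).trans ?_
        exact (hdeg j (by simpa [Nat.lt_succ_iff] using hj)).trans
          (hmono 0 j (Nat.zero_le _) (by simpa [Nat.lt_succ_iff] using hj))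
      · rw [hQ0]
        exact hvan 0 s (by omega) hs
    set q' : ℕ → Polynomial F :=
      fun k => ∑ j ∈ Finset.Icc (k+1) (ν+1), a^(j-1-k) • q j with hq'def
    have q'eval : ∀ k (x : F), (q' k).eval x
        = ∑ j ∈ Finset.Icc (k+1) (ν+1), a^(j-1-k) * (q j).eval x := by
      intro k x
      rw [hq'def, Polynomial.eval_finset_sum]
      exact Finset.sum_congr rfl fun j _ => by rw [Polynomial.eval_smul, smul_eq_mul]
    have hdeg' : ∀ k, k ≤ ν → (q' k).natDegree ≤ m (k+1) := by
      intro k hk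
      refine Polynomial.natDegree_sum_le_of_forall_le _ _ (fun j hj => ?_)
      rw [Finset.mem_Icc] at hj
      refine (Polynomial.natDegree_smul_le _ _).trans ?_
      exact (hdeg j (by omega)).trans (hmono (k+1) j (by omega) (by omega))
    have hrec : ∀ k, k ≤ ν → q' k = q (k+1) + a • q' (k+1) := by
      intro k hk
      have hins : Finset.Icc (k+1) (ν+1) = insert (k+1) (Finset.Icc (k+2) (ν+1)) := by
        ext j; simp [Finset.mem_Icc]; omega
      rw [hq'def]
      simp only []
      rw [hins, Finset.sum_insert (by simp)]
      congr 1
      · rw [show k+1-1-k = 0 by omega, pow_zero, one_smul]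
      · rw [Finset.smul_sum]
        refine Finset.sum_congr rfl fun j hj => ?_
        rw [Finset.mem_Icc] at hj
        rw [smul_smul, ← pow_succ']
        congr 2
        omega
    have hq'zero : ∀ k, k ≤ ν → q' k = 0 := by
      refine ih (fun k => m (k+1)) (fun t => y (t+1)) (fun s t => xs s (t+1)) q'
        (fun j k hjk hk => hm (j+1) (k+1) (by omega) (by omega))
        (fun j k hj hk h => by
          have := hy (j+1) (k+1) (by omega) (by omega) h; omega)
        (fun j s t hj hs ht h => hx (j+1) s t (by omega) hs ht h)
        hdeg' ?_
      intro t s ht hs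
      set x := xs s (t+1) with hxdef
      set b := y (t+1) with hbdef
      have hb : b - a ≠ 0 := by
        refine sub_ne_zero.mpr fun h => ?_
        have := hy (t+1) 0 (by omega) (by omega) h
        omega
      have h1 : ∑ j ∈ Finset.range (ν+2), (q j).eval x * b^j = 0 :=
        hvan (t+1) s (by omega) hs
      have h2 : ∑ j ∈ Finset.range (ν+2), (q j).eval x * a^j = 0 := by
        rw [← hQ0 x, hQ, Polynomial.eval_zero]
      have hkey : (b - a) * (∑ k ∈ Finset.range (ν+1), (q' k).eval x * b^k) = 0 := by
        calc (b - a) * (∑ k ∈ Finset.range (ν+1), (q' k).eval x * b^k)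
            = ∑ k ∈ Finset.range (ν+1), ∑ j ∈ Finset.Icc (k+1) (ν+1),
                (q j).eval x * (b^k * a^(j-1-k)) * (b-a) := by
              rw [Finset.mul_sum]
              refine Finset.sum_congr rfl fun k _ => ?_
              rw [q'eval, Finset.sum_mul, Finset.mul_sum]
              exact Finset.sum_congr rfl fun j _ => by ring
          _ = ∑ j ∈ Finset.range (ν+2), ∑ k ∈ Finset.range j,
                (q j).eval x * (b^k * a^(j-1-k)) * (b-a) := by
              refine Finset.sum_comm' fun k j => ?_
              simp only [Finset.mem_range, Finset.mem_Icc]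
              omega
          _ = ∑ j ∈ Finset.range (ν+2), (q j).eval x * (b^j - a^j) := by
              refine Finset.sum_congr rfl fun j _ => ?_
              rw [← geom_sum₂_mul b a j, Finset.sum_mul, Finset.mul_sum]
              exact Finset.sum_congr rfl fun k _ => by ring
          _ = 0 := by
              simp only [mul_sub]
              rw [Finset.sum_sub_distrib, h1, h2, sub_zero]
      rcases mul_eq_zero.mp hkey with h | h
      · exact absurd h hb
      · exact h
    have hq'top : q' (ν+1) = 0 := by
      rw [hq'def]
      simp only []
      rw [Finset.Icc_eq_empty (by omega), Finset.sum_empty]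
    have hqpos : ∀ k, k ≤ ν → q (k+1) = 0 := by
      intro k hk
      have h1 := hrec k hk
      have h2 : q' (k+1) = 0 := by
        rcases Nat.lt_or_ge k ν with h | h
        · exact hq'zero (k+1) (by omega)
        · have : k = ν := by omega
          rw [this]; exact hq'top
      rw [hq'zero k hk, h2, smul_zero, add_zero] at h1
      exact h1.symm
    have hq0 : q 0 = 0 := by
      have h0 : ∑ j ∈ Finset.range (ν+2), a^j • q j = 0 := by rw [← hQdef]; exact hQ
      rw [Finset.sum_eq_single 0 (fun b hb hb0 => by
        obtain ⟨k, rfl⟩ := Nat.exists_eq_succ_of_ne_zero hb0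
        rw [hqpos k (by simp [Nat.lt_succ_iff] at hb; omega), smul_zero])
        (fun h => absurd (Finset.mem_range.mpr (by omega)) h)] at h0
      simpa using h0
    intro j hj
    rcases Nat.eq_zero_or_eq_succ_pred j with h | h
    · rw [h]; exact hq0
    · rw [h]; exact hqpos (j-1) (by omega)

open MvPolynomial in
lemma sum_tower {M : Type*} [AddCommMonoid M] (ν : ℕ) (m : ℕ → ℕ)
    (hmono : ∀ j, j ≤ ν → m j ≤ m 0) (g : ℕ × ℕ → M) :
    ∑ p ∈ ((Finset.range (m 0 + 1)) ×ˢ Finset.range (ν + 1)).filter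
        (fun p => p.1 ≤ m p.2), g p
      = ∑ j ∈ Finset.range (ν+1), ∑ i ∈ Finset.range (m j + 1), g (i, j) := by
  rw [Finset.sum_filter, Finset.sum_product_right]
  refine Finset.sum_congr rfl fun j hj => ?_
  rw [Finset.mem_range] at hj
  rw [← Finset.sum_filter]
  congr 1
  ext i
  have := hmono j (by omega)
  simp only [Finset.mem_filter, Finset.mem_range]
  omega

lemma ev2_sum {F : Type*} [Field F] (ν : ℕ) (m : ℕ → ℕ)
    (c : towerIndex ν m → F) (A B : F) :
    ev2 A B (∑ p ∈ (towerIndex ν m).attach,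
        c p • (X 0 ^ (p : ℕ × ℕ).1 * X 1 ^ (p : ℕ × ℕ).2 : MvPolynomial (Fin 2) F))
      = ∑ p ∈ (towerIndex ν m).attach,
          c p * (A ^ (p : ℕ × ℕ).1 * B ^ (p : ℕ × ℕ).2) := by
  rw [map_sum]
  refine Finset.sum_congr rfl fun p _ => ?_
  rw [MvPolynomial.smul_eq_C_mul, ev2]
  simp


end Aux

/-- for an x-tower site, the μ monomials `x^i y^j`, `(i,j) ∈ S_x(Ξ)`, are
linearly independent and the evaluation map on their span is a linear isomorphism onto
`F^μ`: `(Ξ, span{x^i y^j})` is a regular (poised) interpolation scheme. -/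
theorem tower_monomial_scheme_poised {F : Type*} [Field F] (ν : ℕ) (m : ℕ → ℕ)
    (y : ℕ → F) (xs : ℕ → ℕ → F)
    (hm : ∀ j k, j < k → k ≤ ν → m k < m j)
    (hy : ∀ j k, j ≤ ν → k ≤ ν → y j = y k → j = k)
    (hx : ∀ j s t, j ≤ ν → s ≤ m j → t ≤ m j → xs s j = xs t j → s = t) :
    LinearIndependent F
      (fun p : towerIndex ν m =>
        (X 0 ^ (p : ℕ × ℕ).1 * X 1 ^ (p : ℕ × ℕ).2 : MvPolynomial (Fin 2) F)) ∧
    ∀ f : ℕ × ℕ → F, ∃! c : towerIndex ν m → F,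
      ∀ q : towerIndex ν m,
        ev2 (xs (q : ℕ × ℕ).1 (q : ℕ × ℕ).2) (y (q : ℕ × ℕ).2)
          (∑ p ∈ (towerIndex ν m).attach,
            c p • (X 0 ^ (p : ℕ × ℕ).1 * X 1 ^ (p : ℕ × ℕ).2 : MvPolynomial (Fin 2) F))
          = f q := by
  classical
  have hmono : ∀ j, j ≤ ν → m j ≤ m 0 := by
    intro j hj
    rcases Nat.eq_zero_or_pos j with rfl | h
    · exact le_rfl
    · exact (hm 0 j h hj).le
  constructor
  · -- linear independence
    have heq : (fun p : towerIndex ν m =>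
        (X 0 ^ (p : ℕ × ℕ).1 * X 1 ^ (p : ℕ × ℕ).2 : MvPolynomial (Fin 2) F))
        = (MvPolynomial.basisMonomials (Fin 2) F) ∘
          (fun p : towerIndex ν m =>
            Finsupp.single 0 (p : ℕ × ℕ).1 + Finsupp.single 1 (p : ℕ × ℕ).2) := by
      funext p
      simp [MvPolynomial.coe_basisMonomials, X_pow_eq_monomial, monomial_mul]
    rw [heq]
    refine (MvPolynomial.basisMonomials (Fin 2) F).linearIndependent.comp _ ?_
    intro p p' h
    have h0 := DFunLike.congr_fun h 0
    have h1 := DFunLike.congr_fun h 1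
    simp [Finsupp.single_apply] at h0 h1
    exact Subtype.ext (Prod.ext h0 h1)
  · -- poisedness
    set M : Matrix (towerIndex ν m) (towerIndex ν m) F :=
      fun qq pp => (xs (qq : ℕ × ℕ).1 (qq : ℕ × ℕ).2) ^ (pp : ℕ × ℕ).1
        * (y (qq : ℕ × ℕ).2) ^ (pp : ℕ × ℕ).2 with hM
    have hLv : ∀ (c : towerIndex ν m → F) (q : towerIndex ν m),
        M.mulVecLin c q = ∑ p ∈ (towerIndex ν m).attach,
          c p * ((xs (q : ℕ × ℕ).1 (q : ℕ × ℕ).2) ^ (p : ℕ × ℕ).1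
            * (y (q : ℕ × ℕ).2) ^ (p : ℕ × ℕ).2) := by
      intro c q
      rw [Matrix.mulVecLin_apply]
      simp [Matrix.mulVecLin_apply, Matrix.mulVec, dotProduct, hM,
        Finset.univ_eq_attach, mul_comm]
    have hinj : Function.Injective M.mulVecLin := by
      rw [injective_iff_map_eq_zero]
      intro c hc0
      set c' : ℕ × ℕ → F :=
        fun p => if h : p ∈ towerIndex ν m then c ⟨p, h⟩ else 0 with hc'
      have hc'eq : ∀ p : towerIndex ν m, c' (p : ℕ × ℕ) = c p := by
        intro p
        simp only [hc']
        rw [dif_pos p.2]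
      set qp : ℕ → Polynomial F :=
        fun j => ∑ i ∈ Finset.range (m j + 1),
          Polynomial.C (c' (i, j)) * Polynomial.X ^ i with hqp
      have hqpeval : ∀ j (t : F), (qp j).eval t
          = ∑ i ∈ Finset.range (m j + 1), c' (i, j) * t ^ i := by
        intro j t
        rw [hqp, Polynomial.eval_finset_sum]
        simp
      have hqz : ∀ j, j ≤ ν → qp j = 0 := by
        refine core ν m y xs qp hm hy hx ?_ ?_
        · intro j hj
          refine Polynomial.natDegree_sum_le_of_forall_le _ _ (fun i hi => ?_)
          refine (Polynomial.natDegree_C_mul_X_pow_le _ _).trans ?_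
          simpa [Nat.lt_succ_iff] using hi
        · intro t s ht hs
          have hmem : (s, t) ∈ towerIndex ν m := by
            have := hmono t ht
            simp only [towerIndex, Finset.mem_filter, Finset.mem_product,
              Finset.mem_range]
            omega
          have h0 : M.mulVecLin c ⟨(s, t), hmem⟩ = 0 := by rw [hc0]; rfl
          rw [hLv] at h0
          have hstep : ∑ p ∈ (towerIndex ν m).attach,
              c p * ((xs s t) ^ (p : ℕ × ℕ).1 * (y t) ^ (p : ℕ × ℕ).2)
              = ∑ p ∈ towerIndex ν m,
                c' p * ((xs s t) ^ p.1 * (y t) ^ p.2) := by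
            rw [← Finset.sum_attach (towerIndex ν m)
              (fun p => c' p * ((xs s t) ^ p.1 * (y t) ^ p.2))]
            refine Finset.sum_congr rfl fun p _ => ?_
            rw [hc'eq]
          rw [hstep] at h0
          rw [towerIndex] at h0
          rw [sum_tower ν m hmono] at h0
          rw [← h0]
          refine Finset.sum_congr rfl fun j _ => ?_
          rw [hqpeval, Finset.sum_mul]
          exact Finset.sum_congr rfl fun i _ => by ring
      funext p
      have hpm := p.2
      simp only [towerIndex, Finset.mem_filter, Finset.mem_product,
        Finset.mem_range] at hpm
      have hcoeff : (qp (p : ℕ × ℕ).2).coeff (p : ℕ × ℕ).1 = c' (p : ℕ × ℕ) := by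
        rw [hqp]
        simp only [Polynomial.finset_sum_coeff, Polynomial.coeff_C_mul,
          Polynomial.coeff_X_pow]
        rw [Finset.sum_eq_single (p : ℕ × ℕ).1]
        · simp
        · intro b _ hb
          simp only [mul_ite, mul_one, mul_zero, ite_eq_right_iff]
          exact fun h => absurd h (Ne.symm hb)
        · intro h
          exact absurd (Finset.mem_range.mpr (by omega)) h
      have h3 : c' (p : ℕ × ℕ) = 0 := by
        rw [← hcoeff, hqz (p : ℕ × ℕ).2 (by omega), Polynomial.coeff_zero]
      rw [hc'eq] at h3
      simpa using h3
    have hsurj : Function.Surjective M.mulVecLin :=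
      LinearMap.injective_iff_surjective.mp hinj
    intro f
    obtain ⟨c, hc⟩ := hsurj (fun q => f q)
    refine ⟨c, fun q => ?_, fun c₂ h₂ => ?_⟩
    · rw [ev2_sum, ← hLv, hc]
    · apply hinj
      funext q
      have e1 : M.mulVecLin c₂ q = f ↑q := by
        rw [hLv c₂ q, ← ev2_sum ν m c₂]; exact h₂ q
      rw [e1]
      exact (congrFun hc q).symm
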